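/- Fix σ ∈ [0,1), ε > 0 and reals 0 < L < U. Let K ≥ 1 and let L = c_1 < c_2 < ... < c_{K+1} = U satisfy Φ^f(c_k, c_{k+1}) = ε for every k ∈ {1,...,K−1} and Φ^f(c_K, c_{K+1}) ≤ ε. Suppose t^f > 1 is a real satisfying ((t^f)^(σ−1) + 1)/((t^f) + 1)^(σ−1) = 2^(2−σ)·(1+ε). Then ln(U/L)/ln(t^f) ≤ K ≤ (1−σ)·ln(U/L)/ln(1+ε) + 1. -/

import Mathlib

/-- f(t) = t^(σ-1) (real power). -/
noncomputable def fCNL (σ t : ℝ) : ℝ := t ^ (σ - 1)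

/-- g(t) = t^σ (real power). -/
noncomputable def gCNL (σ t : ℝ) : ℝ := t ^ σ

/-- Chord (linear interpolation) approximation of f on [c,u], evaluated at t. -/
noncomputable def fhat (σ c u t : ℝ) : ℝ :=
  fCNL σ c + ((fCNL σ u - fCNL σ c) / (u - c)) * (t - c)

/-- Chord (linear interpolation) approximation of g on [c,u], evaluated at t. -/
noncomputable def ghat (σ c u t : ℝ) : ℝ :=
  gCNL σ c + ((gCNL σ u - gCNL σ c) / (u - c)) * (t - c)

/-- Pointwise relative error of the chord approximation of f. -/
noncomputable def phiF (σ c u t : ℝ) : ℝ := (fhat σ c u t - fCNL σ t) / fCNL σ t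

/-- Pointwise relative error of the chord approximation of g. -/
noncomputable def phiG (σ c u t : ℝ) : ℝ := (gCNL σ t - ghat σ c u t) / gCNL σ t

/-- Maximum relative error of the chord approximation of f on [c,u]. -/
noncomputable def PhiF (σ c u : ℝ) : ℝ := sSup (phiF σ c u '' Set.Icc c u)

/-- Maximum relative error of the chord approximation of g on [c,u]. -/
noncomputable def PhiG (σ c u : ℝ) : ℝ := sSup (phiG σ c u '' Set.Icc c u)


lemma M_lt (a : ℝ) (ha : a < 0) {x y : ℝ} (hx : 1 ≤ x) (hxy : x < y) :
    (x ^ a + 1) / (x + 1) ^ a < (y ^ a + 1) / (y + 1) ^ a := by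
  have hderiv : ∀ z : ℝ, 0 < z → HasDerivAt (fun w : ℝ => (w ^ a + 1) / (w + 1) ^ a)
      ((a * z ^ (a - 1) * (z + 1) ^ a - (z ^ a + 1) * (a * (z + 1) ^ (a - 1) * 1)) /
        ((z + 1) ^ a) ^ 2) z := by
    intro z hz
    have h1 : HasDerivAt (fun w : ℝ => w ^ a + 1) (a * z ^ (a - 1)) z :=
      (Real.hasDerivAt_rpow_const (Or.inl hz.ne')).add_const 1
    have h2 : HasDerivAt (fun w : ℝ => (w + 1) ^ a) (a * (z + 1) ^ (a - 1) * 1) z := by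
      have := (Real.hasDerivAt_rpow_const (p := a) (x := z + 1)
        (Or.inl (by positivity))).comp z ((hasDerivAt_id z).add_const 1)
      simpa [Function.comp_def] using this
    exact h1.div h2 (by positivity)
  have hmono : StrictMonoOn (fun w : ℝ => (w ^ a + 1) / (w + 1) ^ a) (Set.Ici 1) := by
    apply strictMonoOn_of_deriv_pos (convex_Ici 1)
    · intro z hz
      have hz0 : (0:ℝ) < z := lt_of_lt_of_le one_pos hz
      exact (hderiv z hz0).continuousAt.continuousWithinAt
    · intro z hz
      rw [interior_Ici] at hz
      have hz0 : (0:ℝ) < z := lt_trans one_pos hz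
      rw [(hderiv z hz0).deriv]
      have hlt : z ^ (a - 1) < 1 := Real.rpow_lt_one_of_one_lt_of_neg hz (by linarith)
      have hq : (0:ℝ) < (z + 1) ^ (a - 1) := Real.rpow_pos_of_pos (by linarith) _
      have hden : (0:ℝ) < ((z + 1) ^ a) ^ 2 := by positivity
      have h1 : (z + 1) ^ a = (z + 1) ^ (a - 1) * (z + 1) := by
        rw [← Real.rpow_add_one (by positivity : (z:ℝ) + 1 ≠ 0) (a - 1)]
        norm_num
      have h2 : z ^ (a - 1) * z = z ^ a := by
        rw [← Real.rpow_add_one hz0.ne' (a - 1)]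
        norm_num
      apply div_pos _ hden
      rw [h1]
      have : a * z ^ (a - 1) * ((z + 1) ^ (a - 1) * (z + 1)) -
          (z ^ a + 1) * (a * (z + 1) ^ (a - 1) * 1)
          = a * (z + 1) ^ (a - 1) * (z ^ (a - 1) - 1) := by
        rw [← h2]; ring
      rw [this]
      have hane : 0 < -a := by linarith
      nlinarith [mul_pos (mul_pos hane hq) (by linarith : (0:ℝ) < 1 - z ^ (a - 1))]
  exact hmono hx (le_trans hx hxy.le) hxy

lemma phiF_le_bound (σ : ℝ) (hσ1 : σ < 1) {c u t : ℝ} (hc : 0 < c) (hcu : c < u)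
    (ht : t ∈ Set.Icc c u) : phiF σ c u t ≤ c ^ (σ - 1) / u ^ (σ - 1) - 1 := by
  obtain ⟨htc, htu⟩ := ht
  have hu : 0 < u := hc.trans hcu
  have ht0 : 0 < t := lt_of_lt_of_le hc htc
  have ha : σ - 1 < 0 := by linarith
  have hua : 0 < u ^ (σ - 1) := Real.rpow_pos_of_pos hu _
  have hta : 0 < t ^ (σ - 1) := Real.rpow_pos_of_pos ht0 _
  have hca : 0 < c ^ (σ - 1) := Real.rpow_pos_of_pos hc _
  have hut : u ^ (σ - 1) ≤ t ^ (σ - 1) := Real.rpow_le_rpow_of_nonpos ht0 htu ha.le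
  have huc : u ^ (σ - 1) ≤ c ^ (σ - 1) := Real.rpow_le_rpow_of_nonpos hc hcu.le ha.le
  have hfhat : fhat σ c u t ≤ c ^ (σ - 1) := by
    unfold fhat fCNL
    have hslope : (u ^ (σ - 1) - c ^ (σ - 1)) / (u - c) ≤ 0 :=
      div_nonpos_of_nonpos_of_nonneg (by linarith) (by linarith)
    nlinarith [mul_nonpos_of_nonpos_of_nonneg hslope (by linarith : (0:ℝ) ≤ t - c)]
  have key : fhat σ c u t / t ^ (σ - 1) ≤ c ^ (σ - 1) / u ^ (σ - 1) :=
    div_le_div₀ hca.le hfhat hua hut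
  unfold phiF fCNL
  rw [sub_div, div_self hta.ne']
  linarith

lemma PhiF_le_bound (σ : ℝ) (hσ1 : σ < 1) {c u : ℝ} (hc : 0 < c) (hcu : c < u) :
    PhiF σ c u ≤ c ^ (σ - 1) / u ^ (σ - 1) - 1 := by
  apply csSup_le ((Set.nonempty_Icc.mpr hcu.le).image _)
  rintro y ⟨t, ht, rfl⟩
  exact phiF_le_bound σ hσ1 hc hcu ht

lemma one_add_phi_mid (σ : ℝ) {c u : ℝ} (hc : 0 < c) (hcu : c < u) :
    ((u / c) ^ (σ - 1) + 1) / ((u / c) + 1) ^ (σ - 1)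
      = (2:ℝ) ^ (2 - σ) * (1 + phiF σ c u ((c + u) / 2)) := by
  have hu : 0 < u := hc.trans hcu
  have huc : (0:ℝ) < u - c := by linarith
  have hm0 : (0:ℝ) < (c + u) / 2 := by positivity
  set a := σ - 1 with ha
  have hA : 0 < c ^ a := Real.rpow_pos_of_pos hc a
  have hB0 : 0 < u ^ a := Real.rpow_pos_of_pos hu a
  have hM : 0 < ((c + u) / 2 : ℝ) ^ a := Real.rpow_pos_of_pos hm0 a
  have h2a : (0:ℝ) < (2:ℝ) ^ a := Real.rpow_pos_of_pos two_pos a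
  have hr0 : (0:ℝ) < u / c := by positivity
  have hra : 0 < (u / c) ^ a := Real.rpow_pos_of_pos hr0 a
  have hr1a : 0 < ((u / c) + 1 : ℝ) ^ a := Real.rpow_pos_of_pos (by positivity) a
  have hfhat : fhat σ c u ((c + u) / 2) = (c ^ a + u ^ a) / 2 := by
    unfold fhat fCNL
    rw [← ha]
    field_simp
    ring
  have hphi : 1 + phiF σ c u ((c + u) / 2) = (c ^ a + u ^ a) / (2 * ((c + u) / 2) ^ a) := by
    unfold phiF fCNL
    rw [hfhat, ← ha]
    field_simp
    ring
  have hB : u ^ a = c ^ a * (u / c) ^ a := by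
    rw [← Real.mul_rpow hc.le hr0.le]
    congr 1
    field_simp
  have hsum : (c + u) ^ a = c ^ a * ((u / c) + 1) ^ a := by
    rw [← Real.mul_rpow hc.le (by positivity)]
    congr 1
    field_simp
    ring
  have hmid : ((c + u) / 2 : ℝ) ^ a = (c + u) ^ a / 2 ^ a :=
    Real.div_rpow (by positivity) (by norm_num) a
  have h2 : (2:ℝ) ^ (2 - σ) = 2 / 2 ^ a := by
    have h : (2:ℝ) ^ ((1:ℝ) - a) = 2 ^ (1:ℝ) / 2 ^ a := Real.rpow_sub two_pos 1 a
    rw [show (2:ℝ) - σ = 1 - a by rw [ha]; ring, h, Real.rpow_one]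
  rw [hphi, h2, hmid, hsum, hB]
  field_simp
  ring

lemma ratio_le (σ ε tf : ℝ) (hσ1 : σ < 1) {c u : ℝ} (hc : 0 < c) (hcu : c < u)
    (htf : 1 < tf)
    (htfeq : (tf ^ (σ - 1) + 1) / (tf + 1) ^ (σ - 1) = (2:ℝ) ^ (2 - σ) * (1 + ε))
    (hPhi : PhiF σ c u ≤ ε) : u ≤ tf * c := by
  have hmid := one_add_phi_mid σ hc hcu
  have hmem : phiF σ c u ((c + u) / 2) ∈ phiF σ c u '' Set.Icc c u :=
    ⟨(c + u) / 2, ⟨by linarith, by linarith⟩, rfl⟩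
  have hbdd : BddAbove (phiF σ c u '' Set.Icc c u) := by
    refine ⟨c ^ (σ - 1) / u ^ (σ - 1) - 1, ?_⟩
    rintro y ⟨t, ht, rfl⟩
    exact phiF_le_bound σ hσ1 hc hcu ht
  have h1 : phiF σ c u ((c + u) / 2) ≤ ε := (le_csSup hbdd hmem).trans hPhi
  have h2pos : (0:ℝ) < (2:ℝ) ^ (2 - σ) := Real.rpow_pos_of_pos two_pos _
  have hMle : ((u / c) ^ (σ - 1) + 1) / ((u / c) + 1) ^ (σ - 1)
      ≤ (tf ^ (σ - 1) + 1) / (tf + 1) ^ (σ - 1) := by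
    rw [hmid, htfeq]
    exact mul_le_mul_of_nonneg_left (by linarith) h2pos.le
  by_contra h
  push_neg at h
  have hlt : tf < u / c := by rw [lt_div_iff₀ hc]; linarith [mul_comm tf c]
  have := M_lt (σ - 1) (by linarith) htf.le hlt
  linarith

theorem stmt_9 (σ ε L U : ℝ) (hσ0 : 0 ≤ σ) (hσ1 : σ < 1) (hε : 0 < ε)
    (hL : 0 < L) (hLU : L < U)
    (K : ℕ) (hK : 1 ≤ K) (c : ℕ → ℝ)
    (hc1 : c 1 = L) (hcK : c (K + 1) = U)
    (hmono : ∀ k, 1 ≤ k → k ≤ K → c k < c (k + 1))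
    (heq : ∀ k, 1 ≤ k → k ≤ K - 1 → PhiF σ (c k) (c (k + 1)) = ε)
    (hlast : PhiF σ (c K) (c (K + 1)) ≤ ε)
    (tf : ℝ) (htf : 1 < tf)
    (htfeq : (tf ^ (σ - 1) + 1) / (tf + 1) ^ (σ - 1) = (2 : ℝ) ^ (2 - σ) * (1 + ε)) :
    Real.log (U / L) / Real.log tf ≤ (K : ℝ) ∧
    (K : ℝ) ≤ (1 - σ) * Real.log (U / L) / Real.log (1 + ε) + 1 := by
  -- positivity along the partition
  have hge : ∀ k, 1 ≤ k → k ≤ K + 1 → L ≤ c k := by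
    intro k
    induction k with
    | zero => omega
    | succ n ih =>
      intro _ h2
      by_cases hn : 1 ≤ n
      · have h3 := hmono n hn (by omega)
        have h4 := ih hn (by omega)
        linarith
      · have : n = 0 := by omega
        subst this
        simp [hc1]
  have hpos : ∀ k, 1 ≤ k → k ≤ K + 1 → 0 < c k := fun k h1 h2 => lt_of_lt_of_le hL (hge k h1 h2)
  have hPhile : ∀ k, 1 ≤ k → k ≤ K → PhiF σ (c k) (c (k + 1)) ≤ ε := by
    intro k h1 h2
    by_cases hk : k = K
    · subst hk; exact hlast
    · exact le_of_eq (heq k h1 (by omega))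
  have hlogtf : 0 < Real.log tf := Real.log_pos htf
  have hlogε : 0 < Real.log (1 + ε) := Real.log_pos (by linarith)
  have hlogUL : Real.log (U / L) = Real.log U - Real.log L :=
    Real.log_div (by linarith) hL.ne'
  constructor
  · -- lower bound
    have hstep : ∀ k, 1 ≤ k → k ≤ K → c (k + 1) ≤ tf * c k := fun k h1 h2 =>
      ratio_le σ ε tf hσ1 (hpos k h1 (by omega)) (hmono k h1 h2) htf htfeq (hPhile k h1 h2)
    have hchain : ∀ j, j ≤ K → Real.log (c (j + 1)) - Real.log (c 1) ≤ (j : ℝ) * Real.log tf := by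
      intro j
      induction j with
      | zero => simp
      | succ n ih =>
        intro h
        have h1 := hstep (n + 1) (by omega) (by omega)
        have hp1 : 0 < c (n + 1) := hpos (n + 1) (by omega) (by omega)
        have hp2 : 0 < c (n + 1 + 1) := hpos (n + 1 + 1) (by omega) (by omega)
        have hlg : Real.log (c (n + 1 + 1)) ≤ Real.log tf + Real.log (c (n + 1)) := by
          calc Real.log (c (n + 1 + 1)) ≤ Real.log (tf * c (n + 1)) :=
                Real.log_le_log hp2 h1
            _ = Real.log tf + Real.log (c (n + 1)) :=
                Real.log_mul (by linarith) hp1.ne'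
        have := ih (by omega)
        push_cast
        push_cast at this
        linarith
    have := hchain K le_rfl
    rw [hcK, hc1] at this
    rw [hlogUL, div_le_iff₀ hlogtf]
    linarith
  · -- upper bound
    have hstep : ∀ k, 1 ≤ k → k ≤ K - 1 →
        Real.log (1 + ε) ≤ (1 - σ) * (Real.log (c (k + 1)) - Real.log (c k)) := by
      intro k h1 h2
      have hck : 0 < c k := hpos k h1 (by omega)
      have hck1 : 0 < c (k + 1) := hpos (k + 1) (by omega) (by omega)
      have hmo := hmono k h1 (by omega)
      have hb := PhiF_le_bound σ hσ1 hck hmo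
      rw [heq k h1 h2] at hb
      have h1ε : 1 + ε ≤ c k ^ (σ - 1) / c (k + 1) ^ (σ - 1) := by linarith
      have hrp : 0 < c (k + 1) ^ (σ - 1) := Real.rpow_pos_of_pos hck1 _
      have hrp2 : 0 < c k ^ (σ - 1) := Real.rpow_pos_of_pos hck _
      have := Real.log_le_log (by linarith) h1ε
      rw [Real.log_div hrp2.ne' hrp.ne', Real.log_rpow hck, Real.log_rpow hck1] at this
      nlinarith
    have hchain : ∀ j, j ≤ K - 1 →
        (j : ℝ) * Real.log (1 + ε) ≤ (1 - σ) * (Real.log (c (j + 1)) - Real.log (c 1)) := by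
      intro j
      induction j with
      | zero => simp
      | succ n ih =>
        intro h
        have h1 := hstep (n + 1) (by omega) (by omega)
        have := ih (by omega)
        push_cast
        push_cast at this
        linarith
    have hfin := hchain (K - 1) le_rfl
    have hKcast : ((K - 1 : ℕ) : ℝ) = (K : ℝ) - 1 := by
      rw [Nat.cast_sub hK]; norm_num
    rw [hKcast] at hfin
    have hK1 : K - 1 + 1 = K := by omega
    rw [hK1, hc1] at hfin
    have hcKU : Real.log (c K) ≤ Real.log U := by
      have := hmono K hK le_rfl
      rw [hcK] at this
      exact (Real.log_le_log (hpos K hK (by omega)) this.le)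
    have hfinal : ((K : ℝ) - 1) * Real.log (1 + ε) ≤ (1 - σ) * Real.log (U / L) := by
      rw [hlogUL]
      nlinarith [hσ1]
    rw [div_add' _ _ _ hlogε.ne']
    rw [le_div_iff₀ hlogε]
    nlinarith
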